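/- Let A be an associative unital ℂ-algebra containing elements E and a family of orthogonal idempotents P_j (j ∈ ℤ) with P_i E = E P_{i-2}, and an invertible central element x. Define R₀ = Σ_{i,j} t^{ij} x^i P_j ⊗ x^j P_i (interpreted as an operator on a tensor product of two modules on which only finitely many P_j act nonzero, and on which x acts invertibly with t a square root of ε). Then R₀(E ⊗ 1) = (E ⊗ K)R₀ and R₀(1 ⊗ E) = (K ⊗ E)R₀, where K = Σ_j x²ε^j P_j. -/

import Mathlib

open Kronecker

private lemma key_aux (t x y : ℂ) (ht0 : t ≠ 0) (hy : y ≠ 0) (a b : ℤ) :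
    t ^ ((a + 2) * b) * x ^ b * y ^ (a + 2) =
      y ^ 2 * (t ^ 2) ^ b * (t ^ (a * b) * x ^ b * y ^ a) := by
  have h1 : t ^ ((a + 2) * b) = t ^ (a * b) * (t ^ (2 : ℤ)) ^ b := by
    rw [← zpow_mul, ← zpow_add₀ ht0]; congr 1; ring
  have h2 : y ^ (a + 2) = y ^ a * y ^ (2 : ℤ) := zpow_add₀ hy a 2
  have h3 : t ^ (2 : ℤ) = t ^ 2 := by
    rw [zpow_two, pow_two]
  have h4 : y ^ (2 : ℤ) = y ^ 2 := by
    rw [zpow_two, pow_two]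
  rw [h1, h2, h3, h4]
  ring

/-- On a tensor product of weight modules (each a direct sum of weight spaces,
with the central element `x` acting by the scalars `xV`, `xW` respectively), the
operator `R₀ = Σ t^{ij} x^i P_j ⊗ x^j P_i` (diagonal in the weight basis) satisfies
`R₀(E ⊗ 1) = (E ⊗ K) R₀` and `R₀(1 ⊗ E) = (K ⊗ E) R₀`, where `K = Σ_j x² ε^j P_j`
acts on a weight-`j` vector by `x² ε^j`, and `E` raises weights by `2`. -/
theorem stmt5 (ε t xV xW : ℂ) (ht : t ^ 2 = ε) (ht0 : t ≠ 0)
    (hxV : xV ≠ 0) (hxW : xW ≠ 0)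
    {ι κ : Type*} [Fintype ι] [Fintype κ] [DecidableEq ι] [DecidableEq κ]
    (wV : ι → ℤ) (wW : κ → ℤ)
    (EV : Matrix ι ι ℂ) (hEV : ∀ p q, EV p q ≠ 0 → wV p = wV q + 2)
    (EW : Matrix κ κ ℂ) (hEW : ∀ p q, EW p q ≠ 0 → wW p = wW q + 2) :
    let R0 : Matrix (ι × κ) (ι × κ) ℂ :=
      Matrix.diagonal fun pq => t ^ (wV pq.1 * wW pq.2) * xV ^ (wW pq.2) * xW ^ (wV pq.1)
    let KV : Matrix ι ι ℂ := Matrix.diagonal fun p => xV ^ 2 * ε ^ (wV p)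
    let KW : Matrix κ κ ℂ := Matrix.diagonal fun q => xW ^ 2 * ε ^ (wW q)
    R0 * (EV ⊗ₖ (1 : Matrix κ κ ℂ)) = (EV ⊗ₖ KW) * R0 ∧
      R0 * ((1 : Matrix ι ι ℂ) ⊗ₖ EW) = (KV ⊗ₖ EW) * R0 := by
  intro R0 KV KW
  constructor
  · ext ⟨p, q⟩ ⟨p', q'⟩
    simp only [Matrix.diagonal_mul, Matrix.mul_diagonal, Matrix.kroneckerMap_apply,
      Matrix.one_apply, Matrix.diagonal_apply, R0, KW]
    by_cases hq : q = q'
    · subst hq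
      simp only [if_pos rfl, if_true, mul_one, one_mul]
      by_cases hE : EV p p' = 0
      · simp [hE]
      · rw [hEV p p' hE, ← ht, key_aux t xV xW ht0 hxW (wV p') (wW q)]
        ring
    · simp [hq]
  · ext ⟨p, q⟩ ⟨p', q'⟩
    simp only [Matrix.diagonal_mul, Matrix.mul_diagonal, Matrix.kroneckerMap_apply,
      Matrix.one_apply, Matrix.diagonal_apply, R0, KV]
    by_cases hp : p = p'
    · subst hp
      simp only [if_pos rfl, if_true, mul_one, one_mul]
      by_cases hE : EW q q' = 0
      · simp [hE]
      · rw [hEW q q' hE, ← ht]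
        rw [show wV p * (wW q' + 2) = (wW q' + 2) * wV p by ring,
          show wV p * wW q' = wW q' * wV p by ring]
        rw [show t ^ ((wW q' + 2) * wV p) * xV ^ (wW q' + 2) * xW ^ wV p
              = t ^ ((wW q' + 2) * wV p) * xW ^ wV p * xV ^ (wW q' + 2) * xV ^ 2 / xV ^ 2 by
            field_simp]
        rw [key_aux t xW xV ht0 hxV (wW q') (wV p)]
        field_simp
    · simp [hp]
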